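/- If a k-uniform hypergraph is semicycle-free, then the number of its edges is at most C(n, k-1), where n is the number of vertices. -/

import Mathlib

variable {V : Type*} [DecidableEq V]

/-- The list of consecutive `k`-windows (as finsets) of a vertex sequence. -/
def windows (k : ℕ) (w : List V) : List (Finset V) :=
  (List.range (w.length + 1 - k)).map fun i => ((w.drop i).take k).toFinset

/-- `w` is the vertex sequence of a chain: `v₁ ≠ v_l`, each window is a `k`-set,
and the `l - k + 1` window edges are pairwise distinct. -/
def IsChainSeq (k : ℕ) (w : List V) : Prop :=
  k ≤ w.length ∧ w.head? ≠ w.getLast? ∧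
  (∀ e ∈ windows k w, e.card = k) ∧ (windows k w).Nodup

/-- `w` is the vertex sequence of a semicycle: `v₁ = v_l`, each window is a `k`-set,
and the `l - k + 1` window edges are pairwise distinct. -/
def IsSemicycleSeq (k : ℕ) (w : List V) : Prop :=
  k ≤ w.length ∧ w.head? = w.getLast? ∧
  (∀ e ∈ windows k w, e.card = k) ∧ (windows k w).Nodup

/-- A hypergraph with edge set `E` contains no semicycle as a subhypergraph. -/
def SemicycleFree (k : ℕ) (E : Finset (Finset V)) : Prop :=
  ¬ ∃ w : List V, IsSemicycleSeq k w ∧ ∀ e ∈ windows k w, e ∈ E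

/-- Every two distinct vertices of `S` lie in a common chain subhypergraph of `E`. -/
def ChainConnOn (k : ℕ) (S : Finset V) (E : Finset (Finset V)) : Prop :=
  ∀ u ∈ S, ∀ v ∈ S, u ≠ v →
    ∃ w : List V, IsChainSeq k w ∧ (∀ e ∈ windows k w, e ∈ E) ∧ u ∈ w ∧ v ∈ w

/-- Chain-connectedness on the whole (finite) vertex type. -/
def ChainConn [Fintype V] (k : ℕ) (E : Finset (Finset V)) : Prop :=
  ChainConnOn k Finset.univ E

/-- A `k`-uniform hypertree: chain-connected and semicycle-free. -/
def IsHypertree [Fintype V] (k : ℕ) (E : Finset (Finset V)) : Prop :=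
  (∀ e ∈ E, e.card = k) ∧ ChainConn k E ∧ SemicycleFree k E

/-- Every chain subhypergraph of `E` has length (number of edges) at most `l`. -/
def ChainsLenLE (k l : ℕ) (E : Finset (Finset V)) : Prop :=
  ∀ w : List V, IsChainSeq k w → (∀ e ∈ windows k w, e ∈ E) →
    w.length + 1 - k ≤ l

/-- An `l`-hypertree: a hypertree all of whose chains have length at most `l`. -/
def IsLHypertree [Fintype V] (k l : ℕ) (E : Finset (Finset V)) : Prop :=
  IsHypertree k E ∧ ChainsLenLE k l E

/-- Edge-minimal: deleting any edge destroys chain-connectedness. -/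
def EdgeMinimal [Fintype V] (k : ℕ) (E : Finset (Finset V)) : Prop :=
  ∀ e ∈ E, ¬ ChainConn k (E.erase e)

/-- Edge-maximal: adding any new `k`-set as an edge creates a semicycle. -/
def EdgeMaximal [Fintype V] (k : ℕ) (E : Finset (Finset V)) : Prop :=
  ∀ s : Finset V, s.card = k → s ∉ E → ¬ SemicycleFree k (insert s E)

/-- `S` is a (tight) star subhypergraph of `E`: a nonempty set of edges of `E`
all containing a common `(k-1)`-set kernel. -/
def IsStarSub (k : ℕ) (E S : Finset (Finset V)) : Prop :=
  S ⊆ E ∧ S.Nonempty ∧ ∃ K : Finset V, K.card = k - 1 ∧ ∀ e ∈ S, K ⊆ e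

/-- `S` is a maximal star subhypergraph of `E`. -/
def IsMaxStar (k : ℕ) (E S : Finset (Finset V)) : Prop :=
  IsStarSub k E S ∧ ∀ T, IsStarSub k E T → S ⊆ T → S = T

lemma windows_length (k : ℕ) (w : List V) : (windows k w).length = w.length + 1 - k := by
  simp [windows]

lemma windows_getElem (k : ℕ) (w : List V) (i : ℕ) (hi : i < w.length + 1 - k) :
    (windows k w)[i]'(by simp [windows_length, hi]) = ((w.drop i).take k).toFinset := by
  simp [windows]

lemma windows_drop (k t : ℕ) (w : List V) (ht : t ≤ w.length) :
    windows k (w.drop t) = (windows k w).drop t := by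
  apply List.ext_getElem
  · simp [windows]; omega
  · intro i h1 h2
    simp only [windows, List.getElem_drop, List.getElem_map, List.getElem_range, List.drop_drop]

lemma windows_concat (k : ℕ) (hk : 1 ≤ k) (w : List V) (hkm : k ≤ w.length) (x : V) :
    windows k (w ++ [x]) = windows k w ++ [(w.drop (w.length + 1 - k) ++ [x]).toFinset] := by
  have hlen : (windows k (w ++ [x])).length = (w.length + 1 - k) + 1 := by
    simp [windows_length]; omega
  apply List.ext_getElem
  · simp [windows_length]; omega
  · intro i h1 h2
    rw [hlen] at h1
    have hdrop : (w ++ [x]).drop i = w.drop i ++ [x] :=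
      List.drop_append_of_le_length (by omega)
    have lhs : (windows k (w ++ [x]))[i]'(by omega) = ((w.drop i ++ [x]).take k).toFinset := by
      rw [windows_getElem k (w ++ [x]) i (by simp; omega), hdrop]
    rcases Nat.lt_or_ge i (w.length + 1 - k) with hi | hi
    · rw [lhs, List.take_append_of_le_length (by simp; omega),
        List.getElem_append_left (by simp [windows_length]; omega),
        windows_getElem k w i hi]
    · have hieq : i = w.length + 1 - k := by omega
      rw [lhs, List.take_of_length_le (by simp; omega),
        List.getElem_append_right (by simp [windows_length]; omega)]
      simp [windows_length, hieq]

lemma nodup_of_toFinset_card (l : List V) (h : l.toFinset.card = l.length) : l.Nodup := by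
  rw [List.card_toFinset] at h
  have := List.Sublist.eq_of_length (List.dedup_sublist l) h
  rw [← this]; exact l.nodup_dedup

lemma semicycleFree_mono {k : ℕ} {E E' : Finset (Finset V)} (h : E' ⊆ E)
    (hsf : SemicycleFree k E) : SemicycleFree k E' :=
  fun ⟨w, hw, hE⟩ => hsf ⟨w, hw, fun e he => h (hE e he)⟩

lemma exists_leaf {k : ℕ} (hk : 2 ≤ k) (E : Finset (Finset V)) (hne : E.Nonempty)
    (hu : ∀ e ∈ E, e.card = k) (hsf : SemicycleFree k E) :
    ∃ e ∈ E, ∃ K : Finset V, K ⊆ e ∧ K.card = k - 1 ∧ ∀ e' ∈ E, K ⊆ e' → e' = e := by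
  classical
  set P : List V → Prop := fun w => (IsChainSeq k w ∧ ∀ e ∈ windows k w, e ∈ E) with hPdef
  -- initial chain
  obtain ⟨e0, he0⟩ := hne
  have hcard0 := hu e0 he0
  have hlen0 : e0.toList.length = k := by simp [hcard0]
  have hwind0 : windows k e0.toList = [e0] := by
    unfold windows
    rw [hlen0, show k + 1 - k = 1 from by omega, List.range_succ, List.range_zero]
    simp [List.take_of_length_le (le_of_eq hlen0)]
  have hinit : P e0.toList := by
    refine ⟨⟨by omega, ?_, by simp [hwind0, hcard0], by simp [hwind0]⟩, by simp [hwind0, he0]⟩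
    rw [List.head?_eq_getElem?, List.getLast?_eq_getElem?]
    intro hcon
    rw [hlen0, List.getElem?_eq_getElem (by omega), List.getElem?_eq_getElem (by omega)] at hcon
    have := (e0.nodup_toList.getElem_inj_iff).mp (Option.some_injective _ hcon)
    omega
  -- maximal chain
  have hbdd : BddAbove {n | ∃ w : List V, P w ∧ w.length = n} := by
    refine ⟨E.card + k, fun n ⟨w, hPw, hn⟩ => ?_⟩
    have hsub : (windows k w).toFinset ⊆ E := by
      intro f hf; exact hPw.2 f (List.mem_toFinset.mp hf)
    have := Finset.card_le_card hsub
    rw [List.toFinset_card_of_nodup hPw.1.2.2.2, windows_length] at this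
    have := hPw.1.1
    omega
  have hSne : {n | ∃ w : List V, P w ∧ w.length = n}.Nonempty := ⟨_, e0.toList, hinit, rfl⟩
  obtain ⟨w, hPw, hwlen⟩ := Nat.sSup_mem hSne hbdd
  have hmax : ∀ w' : List V, P w' → w'.length ≤ w.length := by
    intro w' hw'
    rw [hwlen]
    exact le_csSup hbdd ⟨w', hw', rfl⟩
  obtain ⟨⟨hkm, hhl, hwc, hwnd⟩, hwE⟩ := hPw
  set m := w.length with hm
  -- the leaf edge and kernel
  set d0 : List V := w.drop (m - k) with hd0
  have hd0len : d0.length = k := by simp [hd0]; omega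
  have hd0take : d0.take k = d0 := List.take_of_length_le (le_of_eq hd0len)
  set e : Finset V := d0.toFinset with he
  have hewin : e ∈ windows k w := by
    have h1 : m - k < m + 1 - k := by omega
    have := windows_getElem k w (m - k) h1
    rw [hd0take] at this
    rw [he, ← this]
    exact List.getElem_mem _
  have heE : e ∈ E := hwE e hewin
  have hecard : e.card = k := hu e heE
  have hd0nodup : d0.Nodup := nodup_of_toFinset_card d0 (by rw [hd0len, ← he, hecard])
  have hd1 : w.drop (m + 1 - k) = d0.drop 1 := by
    rw [hd0, List.drop_drop]; congr 1; omega
  set K : Finset V := (w.drop (m + 1 - k)).toFinset with hK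
  have hKsub : K ⊆ e := by
    intro x hx
    rw [hK, List.mem_toFinset, hd1] at hx
    exact List.mem_toFinset.mpr (List.mem_of_mem_drop hx)
  have hKcard : K.card = k - 1 := by
    rw [hK, List.toFinset_card_of_nodup (hd0nodup.sublist (hd1 ▸ List.drop_sublist 1 d0))]
    simp; omega
  refine ⟨e, heE, K, hKsub, hKcard, ?_⟩
  intro e' he'E hKe'
  by_contra hne'
  have hcard' : e'.card = k := hu e' he'E
  have hsd : (e' \ K).card = 1 := by rw [Finset.card_sdiff_of_subset hKe']; omega
  obtain ⟨x, hx⟩ := Finset.card_eq_one.mp hsd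
  have hxe' : x ∈ e' := (Finset.mem_sdiff.mp (hx ▸ Finset.mem_singleton_self x)).1
  have hxK : x ∉ K := (Finset.mem_sdiff.mp (hx ▸ Finset.mem_singleton_self x)).2
  have he'eq : e' = insert x K := by
    refine (Finset.eq_of_subset_of_card_le (Finset.insert_subset hxe' hKe') ?_).symm
    rw [Finset.card_insert_of_notMem hxK, hKcard, hcard']; omega
  by_cases hwin : e' ∈ windows k w
  · -- e' is an earlier window: produce a semicycle
    obtain ⟨i, hi, hie⟩ : ∃ i, i < m + 1 - k ∧ ((w.drop i).take k).toFinset = e' := by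
      simpa [windows] using hwin
    have hine : i ≠ m - k := by
      intro hieq
      apply hne'
      rw [← hie, hieq, ← hd0, hd0take, ← he]
    have hile : i ≤ m - k - 1 := by omega
    have hvK : w[m-1]'(by omega) ∈ K := by
      rw [hK, List.mem_toFinset, List.mem_iff_getElem?]
      refine ⟨k - 2, ?_⟩
      rw [List.getElem?_drop, show m + 1 - k + (k - 2) = m - 1 from by omega,
        List.getElem?_eq_getElem (by omega)]
    have hve' : w[m-1]'(by omega) ∈ (w.drop i).take k := by
      rw [← List.mem_toFinset, hie]
      exact hKe' hvK
    obtain ⟨j, hj, hjv⟩ := List.mem_iff_getElem.mp hve'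
    have hjk : j < k := by
      have : ((w.drop i).take k).length = k := by simp; omega
      omega
    have hv : w[i+j]'(by omega) = w[m-1]'(by omega) := by
      rw [← hjv, List.getElem_take, List.getElem_drop]
    rcases le_or_gt (i + j) (m - k) with ht | ht
    · -- drop (i+j) is a semicycle
      apply hsf
      refine ⟨w.drop (i + j), ⟨by simp; omega, ?_, ?_, ?_⟩, ?_⟩
      · rw [List.head?_drop, List.getLast?_eq_getElem?, List.getElem?_drop, List.length_drop,
          show i + j + (m - (i+j) - 1) = m - 1 from by omega,
          List.getElem?_eq_getElem (by omega), List.getElem?_eq_getElem (by omega)]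
        exact congrArg some hv
      · rw [windows_drop k (i+j) w (by omega)]
        intro f hf; exact hwc f (List.mem_of_mem_drop hf)
      · rw [windows_drop k (i+j) w (by omega)]
        exact hwnd.sublist (List.drop_sublist _ _)
      · rw [windows_drop k (i+j) w (by omega)]
        intro f hf; exact hwE f (List.mem_of_mem_drop hf)
    · -- i+j lands in the last window: contradicts nodup of d0
      have hgt : i + j - (m-k) < d0.length := by rw [hd0len]; omega
      have hk1 : k - 1 < d0.length := by rw [hd0len]; omega
      have hq : d0[i + j - (m-k)]'hgt = d0[k-1]'hk1 := by
        have hq' : d0[i + j - (m-k)]? = d0[k-1]? := by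
          rw [hd0, List.getElem?_drop, List.getElem?_drop,
            show m - k + (i + j - (m-k)) = i + j from by omega,
            show m - k + (k-1) = m - 1 from by omega,
            List.getElem?_eq_getElem (by omega), List.getElem?_eq_getElem (by omega)]
          exact congrArg some hv
        rw [List.getElem?_eq_getElem hgt, List.getElem?_eq_getElem hk1] at hq'
        exact Option.some_injective _ hq'
      have := hd0nodup.getElem_inj_iff.mp hq
      omega
  · -- extend the chain by x
    have hwne : w ≠ [] := by
      intro h
      rw [h] at hm
      simp at hm; omega
    have hlast : (w.drop (m + 1 - k) ++ [x]).toFinset = e' := by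
      rw [List.toFinset_append, he'eq, ← hK]
      simp
    have hwind' : windows k (w ++ [x]) = windows k w ++ [e'] := by
      rw [windows_concat k (by omega) w hkm x, ← hm, hlast]
    have hc' : ∀ f ∈ windows k (w ++ [x]), f.card = k := by
      rw [hwind']; intro f hf
      rcases List.mem_append.mp hf with h | h
      · exact hwc f h
      · simp at h; rw [h]; exact hcard'
    have hnd' : (windows k (w ++ [x])).Nodup := by
      rw [hwind']
      simp [List.nodup_append, hwnd, hwin]
      intro a ha h; exact hwin (h ▸ ha)
    have hE' : ∀ f ∈ windows k (w ++ [x]), f ∈ E := by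
      rw [hwind']; intro f hf
      rcases List.mem_append.mp hf with h | h
      · exact hwE f h
      · simp at h; rw [h]; exact he'E
    have hhead : (w ++ [x]).head? = w.head? := by
      cases w with
      | nil => exact absurd rfl hwne
      | cons a t => simp
    have hlast' : (w ++ [x]).getLast? = some x := by simp
    by_cases hx0 : w.head? = some x
    · exact hsf ⟨w ++ [x], ⟨by simp; omega, by rw [hhead, hlast', hx0], hc', hnd'⟩, hE'⟩
    · have hP' : P (w ++ [x]) :=
        ⟨⟨by simp; omega, by rw [hhead, hlast']; exact hx0, hc', hnd'⟩, hE'⟩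
      have hle := hmax _ hP'
      simp only [List.length_append, List.length_singleton] at hle
      omega

lemma exists_inj {k : ℕ} (hk : 2 ≤ k) :
    ∀ N (E : Finset (Finset V)), E.card ≤ N → (∀ e ∈ E, e.card = k) → SemicycleFree k E →
    ∃ f : Finset V → Finset V, Set.InjOn f ↑E ∧ ∀ e ∈ E, f e ⊆ e ∧ (f e).card = k - 1 := by
  intro N
  induction N with
  | zero =>
    intro E hE _ _
    have hE0 : E = ∅ := Finset.card_eq_zero.mp (Nat.le_zero.mp hE)
    subst hE0
    exact ⟨fun _ => ∅, by simp, by simp⟩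
  | succ N ih =>
    intro E hE hu hsf
    rcases E.eq_empty_or_nonempty with rfl | hne
    · exact ⟨fun _ => ∅, by simp, by simp⟩
    obtain ⟨e, heE, K, hKe, hKcard, hleaf⟩ := exists_leaf hk E hne hu hsf
    obtain ⟨f, hfinj, hf⟩ := ih (E.erase e)
      (by have := Finset.card_erase_of_mem heE; omega)
      (fun e' he' => hu e' (Finset.mem_of_mem_erase he'))
      (semicycleFree_mono (Finset.erase_subset e E) hsf)
    refine ⟨Function.update f e K, ?_, ?_⟩
    · intro a ha b hb hab
      simp only [Finset.mem_coe] at ha hb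
      by_cases hae : a = e <;> by_cases hbe : b = e
      · rw [hae, hbe]
      · exfalso
        rw [hae, Function.update_self, Function.update_of_ne hbe] at hab
        have hb' : b ∈ E.erase e := Finset.mem_erase.mpr ⟨hbe, hb⟩
        exact hbe (hleaf b hb (hab ▸ (hf b hb').1))
      · exfalso
        rw [hbe, Function.update_self, Function.update_of_ne hae] at hab
        have ha' : a ∈ E.erase e := Finset.mem_erase.mpr ⟨hae, ha⟩
        exact hae (hleaf a ha (hab.symm ▸ (hf a ha').1))
      · rw [Function.update_of_ne hae, Function.update_of_ne hbe] at hab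
        exact hfinj (Finset.mem_coe.mpr (Finset.mem_erase.mpr ⟨hae, ha⟩))
          (Finset.mem_coe.mpr (Finset.mem_erase.mpr ⟨hbe, hb⟩)) hab
    · intro a ha
      by_cases hae : a = e
      · subst hae
        rw [Function.update_self]
        exact ⟨hKe, hKcard⟩
      · rw [Function.update_of_ne hae]
        exact hf a (Finset.mem_erase.mpr ⟨hae, ha⟩)


/-- a semicycle-free `k`-uniform hypergraph on `n` vertices has at
most `C(n, k-1)` edges. -/
theorem stmt1 {V : Type*} [Fintype V] [DecidableEq V] (n k : ℕ)
    (hn : Fintype.card V = n)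
    (E : Finset (Finset V)) (hu : ∀ e ∈ E, e.card = k)
    (hsf : SemicycleFree k E) : E.card ≤ n.choose (k - 1) := by
  subst hn
  rcases Nat.lt_or_ge k 2 with hk | hk
  · have hE : E = ∅ := by
      rcases E.eq_empty_or_nonempty with h | ⟨e, he⟩
      · exact h
      exfalso
      interval_cases k
      · have he0 : e = ∅ := Finset.card_eq_zero.mp (hu e he)
        refine hsf ⟨[], ⟨by simp, by simp, ?_, ?_⟩, ?_⟩
        · intro f hf; simp [windows] at hf; simp [hf]
        · simp [windows]
        · intro f hf; simp [windows] at hf; rw [hf, ← he0]; exact he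
      · obtain ⟨a, ha⟩ := Finset.card_eq_one.mp (hu e he)
        have hw : windows 1 [a] = [{a}] := by
          simp [windows, List.range_succ]
        refine hsf ⟨[a], ⟨by simp, by simp, ?_, ?_⟩, ?_⟩
        · intro f hf; rw [hw] at hf; simp at hf; simp [hf]
        · simp [hw]
        · intro f hf; rw [hw] at hf; simp at hf; rw [hf, ← ha]; exact he
    simp [hE]
  · obtain ⟨f, hinj, hf⟩ := exists_inj hk E.card E le_rfl hu hsf
    have himg : E.image f ⊆ Finset.univ.powersetCard (k - 1) := by
      intro s hs
      obtain ⟨a, ha, rfl⟩ := Finset.mem_image.mp hs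
      exact Finset.mem_powersetCard.mpr ⟨Finset.subset_univ _, (hf a ha).2⟩
    calc E.card = (E.image f).card := (Finset.card_image_of_injOn hinj).symm
      _ ≤ (Finset.univ.powersetCard (k - 1)).card := Finset.card_le_card himg
      _ = (Fintype.card V).choose (k - 1) := by
          rw [Finset.card_powersetCard, Finset.card_univ]
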